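/- For every p ≥ 3, inf_{τ > 0} exp(τ/2^p)·Θ_p(τ) < 2. -/
import Mathlib

open Real BigOperators

/-- `Θ_p(τ) = ∑_{z ∈ ℤ} exp(-τ |z|^p)`. -/
noncomputable def Theta (p τ : ℝ) : ℝ :=
  ∑' z : ℤ, Real.exp (-τ * |(z : ℝ)| ^ p)

lemma f_le_g (p : ℝ) (z : ℤ) (hp : 3 ≤ p) :
    Real.exp (-3 * |(z : ℝ)| ^ p) ≤ Real.exp (-3) ^ z.natAbs := by
  have hcast : |(z : ℝ)| = (z.natAbs : ℝ) := by
    rw [Nat.cast_natAbs, Int.cast_abs]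
  rw [← Real.exp_nat_mul]
  apply Real.exp_le_exp.2
  rcases eq_or_ne z 0 with rfl | hz
  · simp [Real.zero_rpow (by linarith : p ≠ 0)]
  · have h1 : (1 : ℝ) ≤ |(z : ℝ)| := by
      rw [hcast]
      exact_mod_cast Nat.one_le_iff_ne_zero.mpr (Int.natAbs_ne_zero.mpr hz)
    have h2 : |(z : ℝ)| ^ (1 : ℝ) ≤ |(z : ℝ)| ^ p :=
      Real.rpow_le_rpow_of_exponent_le h1 (by linarith)
    rw [Real.rpow_one] at h2
    rw [hcast] at h2 ⊢
    nlinarith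

/-- For every `p ≥ 3`, `inf_{τ > 0} exp(τ/2^p) Θ_p(τ) < 2`. -/
theorem Wp_lt_two (p : ℝ) (hp : 3 ≤ p) :
    (⨅ τ : Set.Ioi (0 : ℝ), Real.exp ((τ : ℝ) / 2 ^ p) * Theta p τ) < 2 := by
  set r : ℝ := Real.exp (-3) with hr
  have hr0 : 0 ≤ r := (Real.exp_pos _).le
  have hr1 : r < 1 := Real.exp_lt_one_iff.2 (by norm_num)
  set G : ℤ → ℝ := fun z => r ^ z.natAbs with hG
  have hGnat : (fun n : ℕ => G n) = fun n : ℕ => r ^ n := by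
    funext n; simp [hG]
  have hGneg : (fun n : ℕ => G (-(n + 1))) = fun n : ℕ => r * r ^ n := by
    funext n
    have h : ((-((n : ℤ) + 1))).natAbs = n + 1 := by omega
    simp only [hG, h, pow_succ]
    ring
  have hgnat : Summable (fun n : ℕ => r ^ n) := summable_geometric_of_lt_one hr0 hr1
  have hs1 : Summable (fun n : ℕ => G n) := hGnat ▸ hgnat
  have hs2 : Summable (fun n : ℕ => G (-(n + 1))) := hGneg ▸ hgnat.mul_left r
  have hg : Summable G := Summable.of_nat_of_neg_add_one hs1 hs2
  have hf : Summable (fun z : ℤ => Real.exp (-3 * |(z : ℝ)| ^ p)) :=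
    Summable.of_nonneg_of_le (fun z => (Real.exp_pos _).le) (fun z => f_le_g p z hp) hg
  have hΘ : Theta p 3 ≤ (1 - r)⁻¹ + r * (1 - r)⁻¹ := by
    have h1 : Theta p 3 ≤ ∑' z : ℤ, G z :=
      Summable.tsum_le_tsum (fun z => f_le_g p z hp) hf hg
    have h2 : ∑' z : ℤ, G z = (1 - r)⁻¹ + r * (1 - r)⁻¹ := by
      rw [tsum_of_nat_of_neg_add_one hs1 hs2, hGnat, hGneg, tsum_mul_left,
        tsum_geometric_of_lt_one hr0 hr1]
    exact h1.trans_eq h2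
  -- key numeric facts
  have hrten : r < 1 / 10 := by
    have h3 : (10 : ℝ) < Real.exp 3 := by
      have := Real.add_one_le_exp (1 : ℝ)
      have he : (2.7 : ℝ) < Real.exp 1 := by
        have := Real.exp_one_gt_d9; linarith
      have h3' : (2.7 : ℝ) ^ 3 < (Real.exp 1) ^ 3 := by
        exact pow_lt_pow_left₀ he (by norm_num) (by norm_num)
      have hE : Real.exp 3 = (Real.exp 1) ^ 3 := by
        rw [show (3 : ℝ) = ((3 : ℕ) : ℝ) * 1 by norm_num, Real.exp_nat_mul]
      rw [hE]; nlinarith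
    have hmul : r * Real.exp 3 = 1 := by rw [hr, ← Real.exp_add]; norm_num
    have hrpos : 0 < r := Real.exp_pos _
    nlinarith
  have hΘ2 : Theta p 3 ≤ (1 + r) / (1 - r) := by
    rw [add_div, one_div]
    have : r / (1 - r) = r * (1 - r)⁻¹ := by ring
    linarith [hΘ]
  have hΘpos : 0 ≤ Theta p 3 := tsum_nonneg fun z => (Real.exp_pos _).le
  -- exponent bound
  have h2p : (8 : ℝ) ≤ 2 ^ p := by
    have : (2 : ℝ) ^ (3 : ℝ) ≤ 2 ^ p := Real.rpow_le_rpow_of_exponent_le (by norm_num) hp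
    have h8 : (2 : ℝ) ^ (3 : ℝ) = 8 := by
      rw [show (3 : ℝ) = ((3 : ℕ) : ℝ) by norm_num, Real.rpow_natCast]; norm_num
    linarith
  have hexp : Real.exp (3 / 2 ^ p) ≤ 8 / 5 := by
    have h2ppos : (0 : ℝ) < 2 ^ p := by linarith
    have h1 : (3 : ℝ) / 2 ^ p ≤ 3 / 8 := by
      apply div_le_div_of_nonneg_left (by norm_num) (by norm_num) h2p
    have h2 : Real.exp (3 / 2 ^ p) ≤ Real.exp (3 / 8) := Real.exp_le_exp.2 h1
    have h3 : Real.exp (3 / 8) ≤ 8 / 5 := by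
      have h4 := Real.add_one_le_exp (-(3 / 8) : ℝ)
      have h5 : Real.exp (-(3/8) : ℝ) = (Real.exp (3/8))⁻¹ := Real.exp_neg _
      have h6 : (0 : ℝ) < Real.exp (3 / 8) := Real.exp_pos _
      rw [h5] at h4
      rw [← inv_inv (Real.exp (3/8))]
      have h7 : (5:ℝ)/8 ≤ (Real.exp (3/8))⁻¹ := by linarith
      calc ((Real.exp (3/8))⁻¹)⁻¹ ≤ ((5:ℝ)/8)⁻¹ := by
            apply inv_anti₀ (by norm_num) h7
        _ = 8/5 := by norm_num
    linarith
  -- value at τ = 3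
  have hval : Real.exp ((3 : ℝ) / 2 ^ p) * Theta p 3 < 2 := by
    have hΘ3 : Theta p 3 ≤ (1 + 1/10) / (1 - 1/10) := by
      apply hΘ2.trans
      apply div_le_div₀ (by norm_num) (by linarith) (by linarith) (by linarith)
    have : Real.exp ((3 : ℝ) / 2 ^ p) * Theta p 3 ≤ (8/5) * ((1 + 1/10) / (1 - 1/10)) := by
      apply mul_le_mul hexp hΘ3 hΘpos (by norm_num)
    calc Real.exp ((3 : ℝ) / 2 ^ p) * Theta p 3 ≤ (8/5) * ((1 + 1/10) / (1 - 1/10)) := this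
      _ < 2 := by norm_num
  have hbdd : BddBelow (Set.range fun τ : Set.Ioi (0 : ℝ) =>
      Real.exp ((τ : ℝ) / 2 ^ p) * Theta p τ) := by
    refine ⟨0, fun x hx => ?_⟩
    obtain ⟨τ, rfl⟩ := hx
    exact mul_nonneg (Real.exp_pos _).le (tsum_nonneg fun z => (Real.exp_pos _).le)
  exact lt_of_le_of_lt (ciInf_le hbdd (⟨3, by norm_num⟩ : Set.Ioi (0 : ℝ))) hval
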